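/- arXiv:2505.00489 — 2 statements merged into one kernel-verified Lean document; each statement's English description precedes it below -/
import Mathlib

section
/- If k[φ] a[e^{−ρ}] = n[x] a[y] k[θ] with ρ > 0, and u ≥ 0 is defined by cosh ρ = 2u+1, then e^{iθ} = e^{iφ} ((cosh(ρ/2) + e^{−2iφ} sinh(ρ/2)) / (cosh(ρ/2) + e^{2iφ} sinh(ρ/2)))^{1/2}, where the square root is the principal branch cut along (−∞,0] (this is well-defined since the quantity inside lies off (−∞,0]). -/
open Matrix Complex

/-- `n[x] = (1 x; 0 1)` -/
noncomputable def nM (x : ℝ) : Matrix (Fin 2) (Fin 2) ℝ := !![1, x; 0, 1]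

/-- `a[y] = (√y 0; 0 1/√y)` -/
noncomputable def aM (y : ℝ) : Matrix (Fin 2) (Fin 2) ℝ :=
  !![Real.sqrt y, 0; 0, 1 / Real.sqrt y]

/-- `k[θ] = (cos θ sin θ; -sin θ cos θ)` -/
noncomputable def kM (θ : ℝ) : Matrix (Fin 2) (Fin 2) ℝ :=
  !![Real.cos θ, Real.sin θ; -Real.sin θ, Real.cos θ]

/-- If `k[φ] a[e^{-ρ}] = n[x] a[y] k[θ]` with `ρ > 0`, and `cosh ρ = 2u+1`, then
`e^{iθ} = e^{iφ}((cosh(ρ/2)+e^{-2iφ}sinh(ρ/2))/(cosh(ρ/2)+e^{2iφ}sinh(ρ/2)))^{1/2}`,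
the square root taken with the principal branch (Lean's `Complex.cpow`). -/
theorem stmt5 (φ ρ x y θ u : ℝ) (hρ : 0 < ρ) (hu : 0 ≤ u)
    (hcosh : Real.cosh ρ = 2 * u + 1) (hy : 0 < y)
    (hEq : kM φ * aM (Real.exp (-ρ)) = nM x * aM y * kM θ) :
    Complex.exp ((θ : ℂ) * Complex.I) =
      Complex.exp ((φ : ℂ) * Complex.I) *
        ((((Real.cosh (ρ / 2) : ℝ) : ℂ) +
            Complex.exp (-2 * Complex.I * (φ : ℂ)) * ((Real.sinh (ρ / 2) : ℝ) : ℂ)) /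
          (((Real.cosh (ρ / 2) : ℝ) : ℂ) +
            Complex.exp (2 * Complex.I * (φ : ℂ)) * ((Real.sinh (ρ / 2) : ℝ) : ℂ))) ^
          ((1 : ℂ) / 2) := by
  -- matrix entry equations
  have h10 : (kM φ * aM (Real.exp (-ρ))) 1 0 = (nM x * aM y * kM θ) 1 0 := by rw [hEq]
  have h11 : (kM φ * aM (Real.exp (-ρ))) 1 1 = (nM x * aM y * kM θ) 1 1 := by rw [hEq]
  simp [kM, aM, nM, Matrix.mul_apply, Fin.sum_univ_two] at h10 h11
  have hsr : Real.sqrt (Real.exp (-ρ)) = Real.exp (-ρ/2) := (Real.exp_half _).symm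
  have hinv : Real.exp (-ρ/2) = (Real.exp (ρ/2))⁻¹ := by
    rw [← Real.exp_neg]; ring_nf
  rw [hsr] at h10 h11
  have hsy : 0 < Real.sqrt y := Real.sqrt_pos.2 hy
  have hsy2 : Real.sqrt y ^ 2 = y := Real.sq_sqrt hy.le
  have hepos := Real.exp_pos (-ρ/2)
  have hepos' := Real.exp_pos (ρ/2)
  have hsin : Real.sin θ = Real.sin φ * Real.exp (-ρ/2) * Real.sqrt y := by
    field_simp at h10; rw [neg_div]; linarith
  have hcos : Real.cos θ = Real.cos φ * Real.exp (ρ/2) * Real.sqrt y := by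
    rw [hinv, inv_inv] at h11
    field_simp at h11; linarith
  -- key real identity
  have hkey : y * ((Real.exp (ρ/2) * Real.cos φ)^2 + (Real.exp (-ρ/2) * Real.sin φ)^2) = 1 := by
    have h1 := Real.sin_sq_add_cos_sq θ
    rw [hsin, hcos] at h1
    nlinarith [h1, hsy2]
  -- complex setup
  set Eφ : ℂ := Complex.exp ((φ:ℂ) * Complex.I) with hEφdef
  set Eφ' : ℂ := Complex.exp (-((φ:ℂ) * Complex.I)) with hEφ'def
  have hEE : Eφ * Eφ' = 1 := by
    rw [hEφdef, hEφ'def, ← Complex.exp_add]; simp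
  have hEφ : Eφ = (Real.cos φ : ℂ) + (Real.sin φ : ℂ) * Complex.I := by
    rw [hEφdef, Complex.exp_mul_I]; push_cast; ring
  have hEφ' : Eφ' = (Real.cos φ : ℂ) - (Real.sin φ : ℂ) * Complex.I := by
    have h : -((φ:ℂ) * Complex.I) = ((-φ : ℝ) : ℂ) * Complex.I := by push_cast; ring
    rw [hEφ'def, h, Complex.exp_mul_I]
    push_cast [Complex.cos_neg, Complex.sin_neg]; ring
  set A : ℂ := ((Real.cosh (ρ/2) : ℝ) : ℂ) * Eφ + ((Real.sinh (ρ/2) : ℝ) : ℂ) * Eφ' with hAdef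
  set B : ℂ := ((Real.cosh (ρ/2) : ℝ) : ℂ) * Eφ' + ((Real.sinh (ρ/2) : ℝ) : ℂ) * Eφ with hBdef
  have hc1 : ((Real.exp (ρ/2) : ℝ) : ℂ) = ((Real.cosh (ρ/2):ℝ):ℂ) + ((Real.sinh (ρ/2):ℝ):ℂ) := by
    exact_mod_cast congrArg (fun t : ℝ => (t:ℂ)) (Real.cosh_add_sinh (ρ/2)).symm
  have hc2 : ((Real.exp (-ρ/2) : ℝ) : ℂ) = ((Real.cosh (ρ/2):ℝ):ℂ) - ((Real.sinh (ρ/2):ℝ):ℂ) := by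
    have h : Real.exp (-ρ/2) = Real.cosh (ρ/2) - Real.sinh (ρ/2) := by
      rw [show (-ρ/2 : ℝ) = -(ρ/2) by ring, ← Real.cosh_sub_sinh]
    exact_mod_cast congrArg (fun t : ℝ => (t:ℂ)) h
  have hA : A = ((Real.exp (ρ/2) * Real.cos φ : ℝ):ℂ) + ((Real.exp (-ρ/2) * Real.sin φ : ℝ):ℂ) * Complex.I := by
    rw [hAdef, hEφ, hEφ', Complex.ofReal_mul, Complex.ofReal_mul]
    linear_combination (-(Real.cos φ:ℂ)) * hc1 + (-(Real.sin φ:ℂ)) * Complex.I * hc2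
  have hB : B = ((Real.exp (ρ/2) * Real.cos φ : ℝ):ℂ) - ((Real.exp (-ρ/2) * Real.sin φ : ℝ):ℂ) * Complex.I := by
    rw [hBdef, hEφ, hEφ', Complex.ofReal_mul, Complex.ofReal_mul]
    linear_combination (-(Real.cos φ:ℂ)) * hc1 + (Real.sin φ:ℂ) * Complex.I * hc2
  have hBconj : B = starRingEnd ℂ A := by
    rw [hA, hB]
    simp only [_root_.map_add, _root_.map_mul, Complex.conj_ofReal, Complex.conj_I]
    ring
  have hnA : Complex.normSq A = (Real.exp (ρ/2) * Real.cos φ)^2 + (Real.exp (-ρ/2) * Real.sin φ)^2 := by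
    rw [hA]; exact Complex.normSq_add_mul_I _ _
  have hyAB : (y:ℂ) * (A * B) = 1 := by
    rw [hBconj, Complex.mul_conj, hnA]
    exact_mod_cast congrArg (fun t : ℝ => (t:ℂ)) hkey
  -- the two cpow factors
  have hN : ((Real.cosh (ρ/2):ℝ):ℂ) + Complex.exp (-2*Complex.I*(φ:ℂ)) * ((Real.sinh (ρ/2):ℝ):ℂ) = Eφ' * A := by
    have h2 : Complex.exp (-2*Complex.I*(φ:ℂ)) = Eφ' * Eφ' := by
      rw [hEφ'def, ← Complex.exp_add]; congr 1; ring
    rw [h2, hAdef]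
    linear_combination (-(Real.cosh (ρ/2):ℂ)) * hEE
  have hD : ((Real.cosh (ρ/2):ℝ):ℂ) + Complex.exp (2*Complex.I*(φ:ℂ)) * ((Real.sinh (ρ/2):ℝ):ℂ) = Eφ * B := by
    have h2 : Complex.exp (2*Complex.I*(φ:ℂ)) = Eφ * Eφ := by
      rw [hEφdef, ← Complex.exp_add]; congr 1; ring
    rw [h2, hBdef]
    linear_combination (-(Real.cosh (ρ/2):ℂ)) * hEE
  -- nonvanishing / positivity
  have hAne : A ≠ 0 := by
    intro h; rw [h] at hyAB; simp at hyAB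
  have hBne : B ≠ 0 := by
    intro h; rw [h] at hyAB; simp at hyAB
  have hDne : Eφ * B ≠ 0 := mul_ne_zero (Complex.exp_ne_zero _) hBne
  have hEA : Eφ' * A = ((Real.exp (ρ/2) * Real.cos φ^2 + Real.exp (-ρ/2) * Real.sin φ^2 : ℝ):ℂ)
      + ((Real.cos φ * Real.sin φ * (Real.exp (-ρ/2) - Real.exp (ρ/2)) : ℝ):ℂ) * Complex.I := by
    rw [hEφ', hA]; push_cast; ring_nf
    rw [Complex.I_sq]; ring
  have hrepos : 0 < Real.exp (ρ/2) * Real.cos φ^2 + Real.exp (-ρ/2) * Real.sin φ^2 := by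
    have hle : Real.exp (-ρ/2) ≤ Real.exp (ρ/2) := Real.exp_le_exp.2 (by linarith)
    nlinarith [hle, hepos, sq_nonneg (Real.cos φ), Real.sin_sq_add_cos_sq φ]
  have hwre : 0 < (((Real.sqrt y : ℝ):ℂ) * (Eφ' * A)).re := by
    rw [hEA]
    simp only [Complex.mul_re, Complex.add_re, Complex.add_im, Complex.ofReal_re, Complex.ofReal_im,
      Complex.mul_re, Complex.mul_im, Complex.I_re, Complex.I_im]
    simp
    positivity
  have hyC : ((Real.sqrt y : ℝ):ℂ)^2 = (y:ℂ) := by exact_mod_cast congrArg (fun t : ℝ => (t:ℂ)) hsy2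
  have hET : Complex.exp ((θ:ℂ) * Complex.I) = ((Real.sqrt y : ℝ):ℂ) * A := by
    rw [Complex.exp_mul_I, hA, ← Complex.ofReal_cos, ← Complex.ofReal_sin, hsin, hcos]
    push_cast; ring
  have hquot : (Eφ' * A) / (Eφ * B) = (((Real.sqrt y : ℝ):ℂ) * (Eφ' * A))^(2:ℕ) := by
    rw [div_eq_iff hDne]
    linear_combination (-(Eφ'^2 * A^2 * Eφ * B)) * hyC + (-(Eφ'^2 * A * Eφ)) * hyAB + (-(Eφ' * A)) * hEE
  rw [hN, hD, hquot, show ((1:ℂ)/2) = ((2:ℂ)⁻¹) by norm_num,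
    Complex.sq_cpow_two_inv hwre, hET]
  linear_combination (-(((Real.sqrt y : ℝ):ℂ)) * A) * hEE
end

section
/- For ℓ_1 ≡ ℓ_2 (mod 2), ν ∈ C, and u > 0 with cosh ρ = 2u+1 (ρ > 0), the projected function φ_{ℓ_1,ℓ_2}(a_u, ν) := (1/2π)∫_0^{2π} φ_{ℓ_2}(k[φ] a_u, ν) e^{−iℓ_1 φ} dφ equals (1/2π)∫_0^{2π} (cosh(ρ/2) + sinh(ρ/2)e^{iφ})^{−1/2−ν−ℓ_2/2} (cosh(ρ/2) + sinh(ρ/2)e^{−iφ})^{−1/2−ν+ℓ_2/2} e^{i(ℓ_2−ℓ_1)φ/2} dφ. -/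
open Matrix Complex Real

/-- The basic function `φ_ℓ(g,ν) = y^{1/2+ν} e^{iℓθ}` expressed through the bottom row
`(c,d)` of `g`: `y = 1/(c²+d²)` and `e^{iθ} = (d - ic)/√(c²+d²)`. -/
noncomputable def phiIw (ν : ℂ) (ℓ : ℤ) (g : Matrix (Fin 2) (Fin 2) ℝ) : ℂ :=
  (((g 1 0) ^ 2 + (g 1 1) ^ 2 : ℝ) : ℂ) ^ (-((1 : ℂ) / 2 + ν)) *
    ((((g 1 1 : ℝ) : ℂ) - Complex.I * ((g 1 0 : ℝ) : ℂ)) /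
      ((Real.sqrt ((g 1 0) ^ 2 + (g 1 1) ^ 2) : ℝ) : ℂ)) ^ ℓ

lemma aux_pointwise (ρ : ℝ) (hρ : 0 < ρ) (ℓ₁ ℓ₂ : ℤ) (ν : ℂ) (φ : ℝ) :
    phiIw ν ℓ₂ (kM φ * aM (Real.exp (-ρ))) * Complex.exp (-Complex.I * (ℓ₁ : ℂ) * (φ : ℂ)) =
      (((Real.cosh (ρ / 2) : ℝ) : ℂ) +
          ((Real.sinh (ρ / 2) : ℝ) : ℂ) * Complex.exp (Complex.I * ((2*φ : ℝ) : ℂ))) ^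
          (-(1 : ℂ) / 2 - ν - (ℓ₂ : ℂ) / 2) *
        (((Real.cosh (ρ / 2) : ℝ) : ℂ) +
          ((Real.sinh (ρ / 2) : ℝ) : ℂ) * Complex.exp (-Complex.I * ((2*φ : ℝ) : ℂ))) ^
          (-(1 : ℂ) / 2 - ν + (ℓ₂ : ℂ) / 2) *
        Complex.exp (Complex.I * ((ℓ₂ : ℂ) - (ℓ₁ : ℂ)) / 2 * ((2*φ : ℝ) : ℂ)) := by
  set A := Real.cosh (ρ/2) with hA
  set B := Real.sinh (ρ/2) with hB
  have hApos : 0 < A := Real.cosh_pos _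
  have hBpos : 0 < B := Real.sinh_pos_iff.2 (by positivity)
  have hep : A + B = Real.exp (ρ/2) := Real.cosh_add_sinh _
  have hem : A - B = Real.exp (-(ρ/2)) := Real.cosh_sub_sinh _
  have hBA : B < A := by nlinarith [Real.exp_pos (-(ρ/2))]
  set z : ℂ := (A : ℂ) + (B : ℂ) * Complex.exp (Complex.I * ((2*φ : ℝ) : ℂ)) with hz
  have hexp2 : Complex.exp (Complex.I * ((2*φ : ℝ) : ℂ))
      = ((Real.cos (2*φ) : ℝ) : ℂ) + ((Real.sin (2*φ) : ℝ) : ℂ) * Complex.I := by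
    rw [mul_comm, Complex.exp_mul_I, Complex.ofReal_cos, Complex.ofReal_sin]
  have hzeq : z = ((A + B * Real.cos (2*φ) : ℝ) : ℂ) + ((B * Real.sin (2*φ) : ℝ) : ℂ) * Complex.I := by
    rw [hz, hexp2]; push_cast; ring
  have hzre : z.re = A + B * Real.cos (2*φ) := by
    rw [hzeq]
    simp only [Complex.add_re, Complex.mul_re, Complex.ofReal_re, Complex.ofReal_im,
      Complex.I_re, Complex.I_im, mul_zero, zero_mul, mul_one, sub_zero, add_zero, neg_zero]
  have hzim : z.im = B * Real.sin (2*φ) := by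
    rw [hzeq]
    simp only [Complex.add_im, Complex.mul_im, Complex.ofReal_re, Complex.ofReal_im,
      Complex.I_re, Complex.I_im, mul_zero, zero_mul, mul_one, sub_zero, add_zero, zero_add,
      neg_zero]
  have hzrepos : 0 < z.re := by
    rw [hzre]; nlinarith [Real.neg_one_le_cos (2*φ)]
  have hz0 : z ≠ 0 := by
    intro h; rw [h] at hzrepos; simp at hzrepos
  have hzc0 : (starRingEnd ℂ) z ≠ 0 := by simpa using hz0
  have hargz : z.arg ≠ Real.pi := by
    intro h
    have := Complex.arg_eq_pi_iff.1 h
    linarith [this.1]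
  have hlogc : Complex.log ((starRingEnd ℂ) z) = (starRingEnd ℂ) (Complex.log z) :=
    Complex.log_conj z hargz
  have hconjz : ((A : ℂ) + (B : ℂ) * Complex.exp (-Complex.I * ((2*φ : ℝ) : ℂ)))
      = (starRingEnd ℂ) z := by
    rw [hz]
    simp only [_root_.map_add, _root_.map_mul, ← Complex.exp_conj, Complex.conj_I,
      Complex.conj_ofReal]
  -- matrix entries
  have hsq : Real.sqrt (Real.exp (-ρ)) = Real.exp (-(ρ/2)) := by
    rw [show Real.exp (-ρ) = Real.exp (-(ρ/2)) ^ 2 by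
      rw [sq, ← Real.exp_add]; ring_nf]
    exact Real.sqrt_sq (Real.exp_nonneg _)
  have hg10 : (kM φ * aM (Real.exp (-ρ))) 1 0 = -(Real.sin φ * Real.exp (-(ρ/2))) := by
    simp [kM, aM, Matrix.mul_apply, Fin.sum_univ_two, hsq]
  have hg11 : (kM φ * aM (Real.exp (-ρ))) 1 1 = Real.cos φ * Real.exp (ρ/2) := by
    simp [kM, aM, Matrix.mul_apply, Fin.sum_univ_two, hsq, ← Real.exp_neg]
  set r : ℝ := (-(Real.sin φ * Real.exp (-(ρ/2)))) ^ 2 + (Real.cos φ * Real.exp (ρ/2)) ^ 2 with hrdef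
  have hr : r = Complex.normSq z := by
    rw [Complex.normSq_apply, hzre, hzim, hrdef, ← hem, ← hep, Real.cos_two_mul,
      Real.sin_two_mul]
    linear_combination (A^2 - 2*A*B + B^2 - 4*B^2*Real.cos φ^2) * (Real.sin_sq_add_cos_sq φ)
  have hrpos : 0 < r := hr ▸ Complex.normSq_pos.2 hz0
  have hlogr : ((Real.log r : ℝ) : ℂ) = Complex.log z + (starRingEnd ℂ) (Complex.log z) := by
    rw [Complex.add_conj, Complex.log_re]
    norm_cast
    rw [hr, ← Complex.sq_norm, Real.log_pow]
    push_cast; ring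
  have hsq2 : ((Real.sqrt r : ℝ) : ℂ) = Complex.exp (((Real.log r : ℝ) : ℂ) / 2) := by
    rw [show Real.sqrt r = Real.exp (Real.log r / 2) by
      rw [← Real.log_sqrt hrpos.le, Real.exp_log (Real.sqrt_pos.2 hrpos)]]
    rw [Complex.ofReal_exp]; push_cast; ring_nf
  have hdc : ((Real.cos φ * Real.exp (ρ/2) : ℝ) : ℂ)
      - Complex.I * ((-(Real.sin φ * Real.exp (-(ρ/2))) : ℝ) : ℂ)
      = Complex.exp (Complex.I * (φ : ℂ)) * (starRingEnd ℂ) z := by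
    rw [← hconjz]
    have e1 : Complex.exp (Complex.I * (φ : ℂ))
        = ((Real.cos φ : ℝ) : ℂ) + ((Real.sin φ : ℝ) : ℂ) * Complex.I := by
      rw [mul_comm, Complex.exp_mul_I, Complex.ofReal_cos, Complex.ofReal_sin]
    have e2 : Complex.exp (Complex.I * (φ : ℂ)) * Complex.exp (-Complex.I * ((2*φ : ℝ) : ℂ))
        = ((Real.cos φ : ℝ) : ℂ) - ((Real.sin φ : ℝ) : ℂ) * Complex.I := by
      rw [← Complex.exp_add,
        show Complex.I * (φ : ℂ) + -Complex.I * ((2*φ : ℝ) : ℂ) = ((-φ : ℝ) : ℂ) * Complex.I by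
          push_cast; ring,
        Complex.exp_mul_I]
      push_cast
      rw [Complex.cos_neg, Complex.sin_neg]
      ring
    rw [mul_add, ← mul_assoc, mul_comm (Complex.exp _) ((B:ℂ)), mul_assoc, e2, e1, ← hem, ← hep]
    push_cast; ring
  -- now assemble
  have hr0 : ((r : ℝ) : ℂ) ≠ 0 := by exact_mod_cast hrpos.ne'
  have f1 : ((r : ℝ) : ℂ) ^ (-((1 : ℂ)/2 + ν))
      = Complex.exp ((Complex.log z + (starRingEnd ℂ) (Complex.log z)) * (-((1:ℂ)/2 + ν))) := by
    rw [Complex.cpow_def_of_ne_zero hr0, ← Complex.ofReal_log hrpos.le, hlogr]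
  have fconj : (starRingEnd ℂ) z = Complex.exp ((starRingEnd ℂ) (Complex.log z)) := by
    rw [← hlogc, Complex.exp_log hzc0]
  have f2 : ((((Real.cos φ * Real.exp (ρ/2) : ℝ) : ℂ)
        - Complex.I * ((-(Real.sin φ * Real.exp (-(ρ/2))) : ℝ) : ℂ)) / ((Real.sqrt r : ℝ) : ℂ)) ^ ℓ₂
      = Complex.exp ((ℓ₂ : ℂ) * (Complex.I * (φ : ℂ)))
        * Complex.exp ((ℓ₂ : ℂ) * ((starRingEnd ℂ) (Complex.log z)))
        / Complex.exp ((ℓ₂ : ℂ) * ((Complex.log z + (starRingEnd ℂ) (Complex.log z)) / 2)) := by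
    rw [hdc, div_zpow, mul_zpow, fconj, hsq2, hlogr, Complex.exp_int_mul, Complex.exp_int_mul,
      Complex.exp_int_mul]
  have g1 : z ^ (-(1 : ℂ)/2 - ν - (ℓ₂ : ℂ)/2)
      = Complex.exp (Complex.log z * (-(1 : ℂ)/2 - ν - (ℓ₂ : ℂ)/2)) :=
    Complex.cpow_def_of_ne_zero hz0 _
  have g2 : ((starRingEnd ℂ) z) ^ (-(1 : ℂ)/2 - ν + (ℓ₂ : ℂ)/2)
      = Complex.exp ((starRingEnd ℂ) (Complex.log z) * (-(1 : ℂ)/2 - ν + (ℓ₂ : ℂ)/2)) := by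
    rw [Complex.cpow_def_of_ne_zero hzc0, hlogc]
  show phiIw ν ℓ₂ (kM φ * aM (Real.exp (-ρ))) * Complex.exp (-Complex.I * (ℓ₁ : ℂ) * (φ : ℂ))
      = z ^ (-(1 : ℂ)/2 - ν - (ℓ₂ : ℂ)/2)
        * ((A : ℂ) + (B : ℂ) * Complex.exp (-Complex.I * ((2*φ : ℝ) : ℂ))) ^ (-(1 : ℂ)/2 - ν + (ℓ₂ : ℂ)/2)
        * Complex.exp (Complex.I * ((ℓ₂ : ℂ) - (ℓ₁ : ℂ)) / 2 * ((2*φ : ℝ) : ℂ))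
  rw [hconjz, phiIw, hg10, hg11, g1, g2]
  rw [show ((-(Real.sin φ * Real.exp (-(ρ/2)))) ^ 2 + (Real.cos φ * Real.exp (ρ/2)) ^ 2 : ℝ) = r from rfl]
  rw [f1, f2]
  simp only [← Complex.exp_add, ← Complex.exp_sub]
  congr 1
  push_cast
  ring


noncomputable def stmt10G (ρ : ℝ) (ℓ₁ ℓ₂ : ℤ) (ν : ℂ) (ψ : ℝ) : ℂ :=
  (((Real.cosh (ρ / 2) : ℝ) : ℂ) +
      ((Real.sinh (ρ / 2) : ℝ) : ℂ) * Complex.exp (Complex.I * (ψ : ℂ))) ^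
      (-(1 : ℂ) / 2 - ν - (ℓ₂ : ℂ) / 2) *
    (((Real.cosh (ρ / 2) : ℝ) : ℂ) +
      ((Real.sinh (ρ / 2) : ℝ) : ℂ) * Complex.exp (-Complex.I * (ψ : ℂ))) ^
      (-(1 : ℂ) / 2 - ν + (ℓ₂ : ℂ) / 2) *
    Complex.exp (Complex.I * ((ℓ₂ : ℂ) - (ℓ₁ : ℂ)) / 2 * (ψ : ℂ))

lemma stmt10_repos (ρ : ℝ) (hρ : 0 < ρ) (c : ℝ) (hc : -1 ≤ c ∧ c ≤ 1) :
    0 < Real.cosh (ρ/2) + Real.sinh (ρ/2) * c := by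
  have h1 : 0 < Real.sinh (ρ/2) := Real.sinh_pos_iff.2 (by positivity)
  nlinarith [Real.cosh_sub_sinh (ρ/2), Real.exp_pos (-(ρ/2)), hc.1, hc.2]

lemma stmt10_base_re_pos (ρ : ℝ) (hρ : 0 < ρ) (w : ℂ) (hw : ‖w‖ = 1) :
    0 < (((Real.cosh (ρ / 2) : ℝ) : ℂ) + ((Real.sinh (ρ / 2) : ℝ) : ℂ) * w).re := by
  have h1 : 0 < Real.sinh (ρ/2) := Real.sinh_pos_iff.2 (by positivity)
  have hre : |w.re| ≤ 1 := by
    rw [← hw]; exact Complex.abs_re_le_norm w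
  have := abs_le.1 hre
  simp only [Complex.add_re, Complex.ofReal_re, Complex.mul_re, Complex.ofReal_im, zero_mul,
    sub_zero]
  nlinarith [Real.cosh_sub_sinh (ρ/2), Real.exp_pos (-(ρ/2))]

lemma stmt10_hGcont (ρ : ℝ) (ℓ₁ ℓ₂ : ℤ) (ν : ℂ) (hρ : 0 < ρ) : Continuous (stmt10G ρ ℓ₁ ℓ₂ ν) := by
  unfold stmt10G
  have habs : ∀ ψ : ℝ, ‖Complex.exp (Complex.I * (ψ : ℂ))‖ = 1 := fun ψ => by
    rw [mul_comm]; exact Complex.norm_exp_ofReal_mul_I ψ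
  have habs' : ∀ ψ : ℝ, ‖Complex.exp (-Complex.I * (ψ : ℂ))‖ = 1 := fun ψ => by
    rw [show -Complex.I * (ψ : ℂ) = ((-ψ : ℝ) : ℂ) * Complex.I by push_cast; ring]
    exact Complex.norm_exp_ofReal_mul_I _
  apply Continuous.mul
  apply Continuous.mul
  · apply Continuous.cpow
    · fun_prop
    · exact continuous_const
    · intro ψ
      exact Complex.mem_slitPlane_iff.2 (Or.inl (stmt10_base_re_pos ρ hρ _ (habs ψ)))
  · apply Continuous.cpow
    · fun_prop
    · exact continuous_const
    · intro ψ
      exact Complex.mem_slitPlane_iff.2 (Or.inl (stmt10_base_re_pos ρ hρ _ (habs' ψ)))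
  · fun_prop

lemma stmt10_hGper (ρ : ℝ) (ℓ₁ ℓ₂ : ℤ) (ν : ℂ) (hpar : ℓ₁ % 2 = ℓ₂ % 2) : Function.Periodic (stmt10G ρ ℓ₁ ℓ₂ ν) (2 * Real.pi) := by
  obtain ⟨m, hm⟩ : 2 ∣ (ℓ₂ - ℓ₁) := by omega
  have hmC : (ℓ₂ : ℂ) - (ℓ₁ : ℂ) = 2 * (m : ℂ) := by exact_mod_cast congrArg (fun n : ℤ => (n : ℂ)) hm
  intro ψ
  unfold stmt10G
  have h1 : Complex.exp (Complex.I * ((ψ + 2 * Real.pi : ℝ) : ℂ))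
      = Complex.exp (Complex.I * (ψ : ℂ)) := by
    rw [show (Complex.I * ((ψ + 2 * Real.pi : ℝ) : ℂ)) =
        Complex.I * (ψ : ℂ) + 2 * (Real.pi : ℂ) * Complex.I by push_cast; ring,
      Complex.exp_add, Complex.exp_two_pi_mul_I, mul_one]
  have h2 : Complex.exp (-Complex.I * ((ψ + 2 * Real.pi : ℝ) : ℂ))
      = Complex.exp (-Complex.I * (ψ : ℂ)) := by
    rw [show (-Complex.I * ((ψ + 2 * Real.pi : ℝ) : ℂ)) =
        -Complex.I * (ψ : ℂ) + (-1 : ℤ) * (2 * (Real.pi : ℂ) * Complex.I) by push_cast; ring,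
      Complex.exp_add, Complex.exp_int_mul_two_pi_mul_I, mul_one]
  have h3 : Complex.exp (Complex.I * ((ℓ₂ : ℂ) - (ℓ₁ : ℂ)) / 2 * ((ψ + 2 * Real.pi : ℝ) : ℂ))
      = Complex.exp (Complex.I * ((ℓ₂ : ℂ) - (ℓ₁ : ℂ)) / 2 * (ψ : ℂ)) := by
    rw [show (Complex.I * ((ℓ₂ : ℂ) - (ℓ₁ : ℂ)) / 2 * ((ψ + 2 * Real.pi : ℝ) : ℂ)) =
        Complex.I * ((ℓ₂ : ℂ) - (ℓ₁ : ℂ)) / 2 * (ψ : ℂ) + (m : ℂ) * (2 * (Real.pi : ℂ) * Complex.I) by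
          rw [hmC]; push_cast; ring,
      Complex.exp_add, Complex.exp_int_mul_two_pi_mul_I, mul_one]
  rw [h1, h2, h3]


/-- The integral formula of Lemma `phirewritten`: for `ℓ₁ ≡ ℓ₂ (mod 2)`,
`cosh ρ = 2u+1`, `ρ, u > 0`, the projection
`φ_{ℓ₁,ℓ₂}(a_u,ν) = (1/2π)∫₀^{2π} φ_{ℓ₂}(k[φ]a_u,ν)e^{-iℓ₁φ}dφ` equals
`(1/2π)∫₀^{2π}(cosh(ρ/2)+sinh(ρ/2)e^{iφ})^{-1/2-ν-ℓ₂/2}(cosh(ρ/2)+sinh(ρ/2)e^{-iφ})^{-1/2-ν+ℓ₂/2} e^{i(ℓ₂-ℓ₁)φ/2}dφ`. -/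
theorem stmt10 (u ρ : ℝ) (hu : 0 < u) (hρ : 0 < ρ) (hcosh : Real.cosh ρ = 2 * u + 1)
    (ℓ₁ ℓ₂ : ℤ) (hpar : ℓ₁ % 2 = ℓ₂ % 2) (ν : ℂ) :
    (1 / (2 * (Real.pi : ℂ))) *
        ∫ φ in (0 : ℝ)..(2 * Real.pi),
          phiIw ν ℓ₂ (kM φ * aM (Real.exp (-ρ))) * Complex.exp (-Complex.I * (ℓ₁ : ℂ) * (φ : ℂ)) =
      (1 / (2 * (Real.pi : ℂ))) *
        ∫ φ in (0 : ℝ)..(2 * Real.pi),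
          (((Real.cosh (ρ / 2) : ℝ) : ℂ) +
              ((Real.sinh (ρ / 2) : ℝ) : ℂ) * Complex.exp (Complex.I * (φ : ℂ))) ^
              (-(1 : ℂ) / 2 - ν - (ℓ₂ : ℂ) / 2) *
            (((Real.cosh (ρ / 2) : ℝ) : ℂ) +
              ((Real.sinh (ρ / 2) : ℝ) : ℂ) * Complex.exp (-Complex.I * (φ : ℂ))) ^
              (-(1 : ℂ) / 2 - ν + (ℓ₂ : ℂ) / 2) *
            Complex.exp (Complex.I * ((ℓ₂ : ℂ) - (ℓ₁ : ℂ)) / 2 * (φ : ℂ)) := by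
  congr 1
  have key : ∀ φ : ℝ,
      phiIw ν ℓ₂ (kM φ * aM (Real.exp (-ρ))) * Complex.exp (-Complex.I * (ℓ₁ : ℂ) * (φ : ℂ))
        = stmt10G ρ ℓ₁ ℓ₂ ν (2 * φ) := fun φ => aux_pointwise ρ hρ ℓ₁ ℓ₂ ν φ
  show _ = ∫ φ in (0:ℝ)..(2*Real.pi), stmt10G ρ ℓ₁ ℓ₂ ν φ
  have hint : ∀ a b : ℝ, IntervalIntegrable (stmt10G ρ ℓ₁ ℓ₂ ν) MeasureTheory.volume a b :=
    fun a b => (stmt10_hGcont ρ ℓ₁ ℓ₂ ν hρ).intervalIntegrable a b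
  rw [intervalIntegral.integral_congr (g := fun φ => stmt10G ρ ℓ₁ ℓ₂ ν (2*φ)) (fun x _ => key x),
    intervalIntegral.integral_comp_mul_left (stmt10G ρ ℓ₁ ℓ₂ ν) two_ne_zero,
    show (2:ℝ) * 0 = 0 by norm_num,
    show (2:ℝ) * (2*Real.pi) = 2*Real.pi + 2*Real.pi by ring,
    ← intervalIntegral.integral_add_adjacent_intervals (hint 0 (2*Real.pi))
      (hint (2*Real.pi) (2*Real.pi + 2*Real.pi)),
    (stmt10_hGper ρ ℓ₁ ℓ₂ ν hpar).intervalIntegral_add_eq (2*Real.pi) 0,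
    zero_add, ← two_smul ℝ, smul_smul]
  norm_num
end
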